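/- arXiv:1603.04136 — 2 statements merged into one kernel-verified Lean document; each statement's English description precedes it below -/
import Mathlib

section
/- Let J : ℝ^M → ℝ be twice continuously differentiable with ν I_M ≤ ∇²J(w) ≤ δ I_M for all w (0 < ν ≤ δ) and unique minimizer w° (∇J(w°) = 0). Let β₁, β₂ ∈ [0,1) satisfy β₁ + β₂ = β ∈ [0,1) and β₁β₂ = 0, and consider the momentum recursion ψ_{i-1} = w_{i-1} + β₁(w_{i-1} − w_{i-2}), w_i = ψ_{i-1} − μ_m(∇J(ψ_{i-1}) + s_i(ψ_{i-1})) + β₂(ψ_{i-1} − ψ_{i-2}). Define the error vectors w̃_i = w° − w_i and ψ̃_i = w° − ψ_i, the transformed errors ŵ_i = (w̃_i − β w̃_{i-1})/(1−β) and w̌_i = (w̃_i − w̃_{i-1})/(1−β), the constant β' = ββ₁ + β₂, and the random matrix H_{i-1} = ∫₀¹ ∇²J(w° − t ψ̃_{i-1}) dt. Then for every i ≥ 0 the following exact identities hold: ŵ_i = (I_M − (μ_m/(1−β)) H_{i-1}) ŵ_{i-1} + (μ_m β'/(1−β)) H_{i-1} w̌_{i-1} + (μ_m/(1−β)) s_i(ψ_{i-1}),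 and w̌_i = −(μ_m/(1−β)) H_{i-1} ŵ_{i-1} + (β I_M + (μ_m β'/(1−β)) H_{i-1}) w̌_{i-1} + (μ_m/(1−β)) s_i(ψ_{i-1}). -/
open MeasureTheory Filter intervalIntegral
open scoped RealInnerProductSpace

noncomputable section

set_option maxHeartbeats 1000000

/-- `ℝ^M` with the Euclidean norm. -/
abbrev Vec (M : ℕ) := EuclideanSpace ℝ (Fin M)

/-- extended recursion / Lemma 3 of the paper: the momentum
recursion, written in the transformed variables
`ŵ_i = (w̃_i − β w̃_{i-1})/(1−β)`, `w̌_i = (w̃_i − w̃_{i-1})/(1−β)`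
(with `w̃_i = w° − w_i`), satisfies the exact first-order identities
`ŵ_i = (I − (μ_m/(1−β))H_{i-1}) ŵ_{i-1} + (μ_m β'/(1−β)) H_{i-1} w̌_{i-1}
       + (μ_m/(1−β)) s_i`, and
`w̌_i = −(μ_m/(1−β)) H_{i-1} ŵ_{i-1} + (β I + (μ_m β'/(1−β)) H_{i-1}) w̌_{i-1}
       + (μ_m/(1−β)) s_i`,
where `β' = ββ₁ + β₂` and `H_{i-1} = ∫₀¹ ∇²J(w° − t ψ̃_{i-1}) dt`. -/
theorem momentum_extended_recursion
    {M : ℕ} (hM : 0 < M)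
    (J : Vec M → ℝ) (hJ : ContDiff ℝ 2 J)
    (ν δ : ℝ) (hν : 0 < ν) (hνδ : ν ≤ δ)
    (hHess : ∀ w v : Vec M,
      ν * ‖v‖ ^ 2 ≤ ⟪fderiv ℝ (gradient J) w v, v⟫ ∧
      ⟪fderiv ℝ (gradient J) w v, v⟫ ≤ δ * ‖v‖ ^ 2)
    (wo : Vec M) (hmin : ∀ w, J wo ≤ J w) (hgrad0 : gradient J wo = 0)
    (β β₁ β₂ : ℝ)
    (hβ₁0 : 0 ≤ β₁) (hβ₁1 : β₁ < 1) (hβ₂0 : 0 ≤ β₂) (hβ₂1 : β₂ < 1)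
    (hβ0 : 0 ≤ β) (hβ1 : β < 1)
    (hsum : β₁ + β₂ = β) (hprod : β₁ * β₂ = 0)
    (μm : ℝ) (hμm : 0 < μm)
    (s : ℤ → Vec M)
    (w ψ : ℤ → Vec M)
    (hinit : ψ (-2) = w (-2))
    (hψ : ∀ i : ℤ, -1 ≤ i → ψ i = w i + β₁ • (w i - w (i - 1)))
    (hw : ∀ i : ℤ, 0 ≤ i →
      w i = ψ (i - 1) - μm • (gradient J (ψ (i - 1)) + s i)
        + β₂ • (ψ (i - 1) - ψ (i - 2))) :
    ∀ i : ℤ, 0 ≤ i →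
      (let hatw : ℤ → Vec M :=
        fun j => (1 - β)⁻¹ • ((wo - w j) - β • (wo - w (j - 1)));
      let chkw : ℤ → Vec M :=
        fun j => (1 - β)⁻¹ • ((wo - w j) - (wo - w (j - 1)));
      let H : Vec M →L[ℝ] Vec M :=
        ∫ t in (0:ℝ)..1, fderiv ℝ (gradient J) (wo - t • (wo - ψ (i - 1)));
      hatw i = hatw (i - 1) - (μm / (1 - β)) • H (hatw (i - 1))
          + (μm * (β * β₁ + β₂) / (1 - β)) • H (chkw (i - 1))
          + (μm / (1 - β)) • s i ∧
      chkw i = -((μm / (1 - β)) • H (hatw (i - 1))) + β • chkw (i - 1)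
          + (μm * (β * β₁ + β₂) / (1 - β)) • H (chkw (i - 1))
          + (μm / (1 - β)) • s i) := by
  have hg1 : ContDiff ℝ 1 (gradient J) := by
    have hgr : gradient J = fun x => (InnerProductSpace.toDual ℝ (Vec M)).symm (fderiv ℝ J x) := rfl
    rw [hgr]
    exact (InnerProductSpace.toDual ℝ (Vec M)).symm.contDiff.comp (hJ.fderiv_right (by norm_num))
  have hb : (1 : ℝ) - β ≠ 0 := by linarith
  intro i hi
  have h1 : ψ (i - 1) = w (i - 1) + β₁ • (w (i - 1) - w (i - 2)) := by
    have h := hψ (i - 1) (by omega)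
    rwa [show i - 1 - 1 = i - 2 by ring] at h
  have hrec : w i = w (i - 1) + β • (w (i - 1) - w (i - 2))
      - μm • (gradient J (ψ (i - 1)) + s i) := by
    have hwi := hw i hi
    rcases mul_eq_zero.mp hprod with h0 | h0
    · -- β₁ = 0
      have hψ1 : ψ (i - 1) = w (i - 1) := by rw [h1, h0]; simp
      have hψ2 : ψ (i - 2) = w (i - 2) := by
        obtain rfl | hi1 : i = 0 ∨ 1 ≤ i := by omega
        · rw [show (0:ℤ) - 2 = -2 by norm_num]; exact hinit
        · have h := hψ (i - 2) (by omega)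
          simpa [h0] using h
      rw [hψ1, hψ2] at hwi
      rw [hψ1, hwi, ← hsum, h0]
      module
    · -- β₂ = 0
      rw [h0] at hwi
      simp only [zero_smul, add_zero] at hwi
      rw [h1] at hwi ⊢
      rw [hwi, ← hsum, h0]
      module
  set u := wo - ψ (i - 1) with hu
  set Hm : Vec M →L[ℝ] Vec M :=
    ∫ t in (0:ℝ)..1, fderiv ℝ (gradient J) (wo - t • u) with hHm
  have hγ : ∀ t : ℝ, HasDerivAt (fun t : ℝ => wo - t • u) (-u) t := by
    intro t
    simpa using ((hasDerivAt_id t).smul_const u).const_sub wo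
  have hcontD : Continuous (fun t : ℝ => fderiv ℝ (gradient J) (wo - t • u)) := by
    exact (hg1.continuous_fderiv one_ne_zero).comp
      (continuous_const.sub (continuous_id.smul continuous_const))
  have hder : ∀ t ∈ Set.uIcc (0:ℝ) 1,
      HasDerivAt (fun t : ℝ => gradient J (wo - t • u))
        ((fderiv ℝ (gradient J) (wo - t • u)) (-u)) t := by
    intro t _
    exact ((hg1.differentiable one_ne_zero (wo - t • u)).hasFDerivAt).comp_hasDerivAt t (hγ t)
  have hint : IntervalIntegrable (fun t : ℝ => (fderiv ℝ (gradient J) (wo - t • u)) (-u))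
      MeasureTheory.volume 0 1 :=
    (hcontD.clm_apply continuous_const).intervalIntegrable 0 1
  have hFTC : ∫ t in (0:ℝ)..1, (fderiv ℝ (gradient J) (wo - t • u)) (-u)
      = gradient J (ψ (i - 1)) := by
    rw [intervalIntegral.integral_eq_sub_of_hasDerivAt hder hint]
    simp [hu, hgrad0, sub_sub_cancel]
  have happ : Hm (-u) = gradient J (ψ (i - 1)) := by
    rw [hHm, ContinuousLinearMap.intervalIntegral_apply (hcontD.intervalIntegrable 0 1) (-u)]
    exact hFTC
  have hHu : Hm u = -gradient J (ψ (i - 1)) := by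
    rw [← happ, map_neg, neg_neg]
  have hF2 : (1 - β)⁻¹ • (wo - w (i - 1) - β • (wo - w (i - 2)))
      - (β * β₁ + β₂) • ((1 - β)⁻¹ • (wo - w (i - 1) - (wo - w (i - 2)))) = u := by
    rw [hu, h1]
    match_scalars <;> field_simp <;> (try rw [← hsum]) <;> ring
  have hH : Hm ((1 - β)⁻¹ • (wo - w (i - 1) - β • (wo - w (i - 2))))
      = (β * β₁ + β₂) • Hm ((1 - β)⁻¹ • (wo - w (i - 1) - (wo - w (i - 2))))
        - gradient J (ψ (i - 1)) := by
    have h := congrArg Hm hF2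
    rw [map_sub, hHu] at h
    rw [sub_eq_iff_eq_add] at h
    rw [h, Hm.map_smul (β * β₁ + β₂)]
    abel
  have g1 : (1 - β)⁻¹ • (wo - w i - β • (wo - w (i - 1)))
      = (1 - β)⁻¹ • (wo - w (i - 1) - β • (wo - w (i - 2)))
        - (μm / (1 - β)) • Hm ((1 - β)⁻¹ • (wo - w (i - 1) - β • (wo - w (i - 2))))
        + (μm * (β * β₁ + β₂) / (1 - β)) •
            Hm ((1 - β)⁻¹ • (wo - w (i - 1) - (wo - w (i - 2))))
        + (μm / (1 - β)) • s i := by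
    rw [hH, hrec]
    match_scalars <;> field_simp <;> (try rw [← hsum]) <;> ring
  have g2 : (1 - β)⁻¹ • (wo - w i - (wo - w (i - 1)))
      = -((μm / (1 - β)) • Hm ((1 - β)⁻¹ • (wo - w (i - 1) - β • (wo - w (i - 2)))))
        + β • ((1 - β)⁻¹ • (wo - w (i - 1) - (wo - w (i - 2))))
        + (μm * (β * β₁ + β₂) / (1 - β)) •
            Hm ((1 - β)⁻¹ • (wo - w (i - 1) - (wo - w (i - 2))))
        + (μm / (1 - β)) • s i := by
    rw [hH, hrec]
    match_scalars <;> field_simp <;> (try rw [← hsum]) <;> ring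
  refine ⟨?_, ?_⟩ <;> beta_reduce <;> rw [show i - 1 - 1 = i - 2 by ring]
  · exact g1
  · exact g2

end
end

section
/- For all real numbers x₁ and x₂: | e^{x₁}/(1 + e^{x₁})² − e^{x₂}/(1 + e^{x₂})² | ≤ | tanh((x₂ − x₁)/2) | ≤ |x₂ − x₁| / 2. In other words, the logistic sigmoid derivative x ↦ e^{x}/(1+e^{x})² satisfies a pointwise difference bound by the hyperbolic tangent of the half-difference, and hence is (1/2)-Lipschitz. -/
lemma sinh_le_mul_cosh' {y : ℝ} (hy : 0 ≤ y) : Real.sinh y ≤ y * Real.cosh y := by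
  have hmono : MonotoneOn (fun t : ℝ => t * Real.cosh t - Real.sinh t) (Set.Ici 0) := by
    have hd : ∀ t : ℝ, HasDerivAt (fun t : ℝ => t * Real.cosh t - Real.sinh t)
        (t * Real.sinh t) t := by
      intro t
      have h : HasDerivAt (fun t : ℝ => t * Real.cosh t - Real.sinh t)
          (1 * Real.cosh t + id t * Real.sinh t - Real.cosh t) t :=
        ((hasDerivAt_id t).mul (Real.hasDerivAt_cosh t)).sub (Real.hasDerivAt_sinh t)
      convert h using 1
      simp only [id]
      ring
    apply monotoneOn_of_deriv_nonneg (convex_Ici 0)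
    · exact (Continuous.sub (continuous_id.mul Real.continuous_cosh)
        Real.continuous_sinh).continuousOn
    · intro t ht
      exact (hd t).differentiableAt.differentiableWithinAt
    · intro t ht
      rw [interior_Ici] at ht
      rw [(hd t).deriv]
      exact mul_nonneg (le_of_lt ht) (Real.sinh_nonneg_iff.mpr (le_of_lt ht))
  have h0 : (0 : ℝ) ∈ Set.Ici (0 : ℝ) := Set.mem_Ici.mpr le_rfl
  have hy' : y ∈ Set.Ici (0 : ℝ) := hy
  have := hmono h0 hy' hy
  simp at this
  linarith

lemma abs_tanh_le_abs (y : ℝ) : |Real.tanh y| ≤ |y| := by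
  have key : ∀ t : ℝ, 0 ≤ t → |Real.tanh t| ≤ |t| := by
    intro t ht
    have hc := Real.cosh_pos t
    have h1 : Real.tanh t ≤ t := by
      rw [Real.tanh_eq_sinh_div_cosh, div_le_iff₀ hc]
      exact sinh_le_mul_cosh' ht
    have h2 : 0 ≤ Real.tanh t := by
      rw [Real.tanh_eq_sinh_div_cosh]
      exact div_nonneg (Real.sinh_nonneg_iff.mpr ht) hc.le
    rw [abs_of_nonneg h2, abs_of_nonneg ht]
    exact h1
  rcases le_or_gt 0 y with h | h
  · exact key y h
  · have := key (-y) (by linarith)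
    rwa [Real.tanh_neg, abs_neg, abs_neg] at this

/-- For all real `x₁ x₂`,
`|e^{x₁}/(1+e^{x₁})² − e^{x₂}/(1+e^{x₂})²| ≤ |tanh((x₂−x₁)/2)| ≤ |x₂−x₁|/2`. -/
theorem logistic_sigmoid_derivative_tanh_bound (x₁ x₂ : ℝ) :
    |Real.exp x₁ / (1 + Real.exp x₁) ^ 2 - Real.exp x₂ / (1 + Real.exp x₂) ^ 2| ≤
      |Real.tanh ((x₂ - x₁) / 2)| ∧
    |Real.tanh ((x₂ - x₁) / 2)| ≤ |x₂ - x₁| / 2 := by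
  constructor
  · set u := Real.exp x₁ with hu_def
    set v := Real.exp x₂ with hv_def
    have hu : 0 < u := Real.exp_pos x₁
    have hv : 0 < v := Real.exp_pos x₂
    -- tanh ((x₂-x₁)/2) = (v-u)/(v+u)
    have ha : Real.exp (x₁ / 2) ^ 2 = u := by
      rw [sq, ← Real.exp_add]; norm_num; exact hu_def.symm
    have hb : Real.exp (x₂ / 2) ^ 2 = v := by
      rw [sq, ← Real.exp_add]; norm_num; exact hv_def.symm
    have htanh : Real.tanh ((x₂ - x₁) / 2) = (v - u) / (v + u) := by
      rw [Real.tanh_eq_sinh_div_cosh, Real.sinh_eq, Real.cosh_eq]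
      have he1 : Real.exp ((x₂ - x₁) / 2) = Real.exp (x₂ / 2) / Real.exp (x₁ / 2) := by
        rw [← Real.exp_sub]; ring_nf
      have he2 : Real.exp (-((x₂ - x₁) / 2)) = Real.exp (x₁ / 2) / Real.exp (x₂ / 2) := by
        rw [← Real.exp_sub]; ring_nf
      rw [he1, he2, ← ha, ← hb]
      have hA : Real.exp (x₁ / 2) ≠ 0 := (Real.exp_pos _).ne'
      have hB : Real.exp (x₂ / 2) ≠ 0 := (Real.exp_pos _).ne'
      have hAB : Real.exp (x₂ / 2) ^ 2 + Real.exp (x₁ / 2) ^ 2 ≠ 0 := by positivity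
      have hAB2 : Real.exp (x₂ / 2) / Real.exp (x₁ / 2) + Real.exp (x₁ / 2) / Real.exp (x₂ / 2) ≠ 0 := by positivity
      field_simp
    have hexpr : u / (1 + u) ^ 2 - v / (1 + v) ^ 2
        = (u - v) * (1 - u * v) / ((1 + u) * (1 + v)) ^ 2 := by
      field_simp
      ring
    rw [hexpr, htanh, abs_div, abs_div, abs_mul]
    have hden1 : (0 : ℝ) < ((1 + u) * (1 + v)) ^ 2 := by positivity
    have hden2 : (0 : ℝ) < v + u := by linarith
    rw [abs_of_pos hden1, abs_of_pos hden2, div_le_div_iff₀ hden1 hden2]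
    have habs : |v - u| = |u - v| := abs_sub_comm v u
    rw [habs]
    have key : |1 - u * v| * (v + u) ≤ ((1 + u) * (1 + v)) ^ 2 := by
      have h1 : |1 - u * v| ≤ 1 + u * v := by
        rw [abs_le]
        constructor <;> nlinarith
      calc |1 - u * v| * (v + u) ≤ (1 + u * v) * (v + u) := by
            apply mul_le_mul_of_nonneg_right h1 (by linarith)
        _ ≤ ((1 + u) * (1 + v)) ^ 2 := by nlinarith [sq_nonneg (u + v), mul_pos hu hv]
    calc |u - v| * |1 - u * v| * (v + u) = |u - v| * (|1 - u * v| * (v + u)) := by ring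
      _ ≤ |u - v| * ((1 + u) * (1 + v)) ^ 2 := by
          exact mul_le_mul_of_nonneg_left key (abs_nonneg _)
  · have := abs_tanh_le_abs ((x₂ - x₁) / 2)
    rwa [abs_div, abs_two] at this
end
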